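/- arXiv:1204.1832 — 4 statements merged into one kernel-verified Lean document; each statement's English description precedes it below -/
import Mathlib

section
/- Let p and p̂ be probability mass functions on {0,1,...,k} with |p̂(i) - p(i)| ≤ ε·p(i) for all i. Let E = Σᵢ i·p(i), ΔE = Σᵢ i·p̂(i) - E, and Var = Σᵢ (i - E)²·p(i). Then (ΔE)² ≤ ε²·Var. -/
open Finset

theorem delta_expectation_sq_bound_loose (k : ℕ) (ε : ℝ) (hε : 0 ≤ ε) (p phat : ℕ → ℝ)
    (hp : ∀ i ∈ range (k + 1), 0 ≤ p i) (hphat : ∀ i ∈ range (k + 1), 0 ≤ phat i)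
    (hsum : ∑ i ∈ range (k + 1), p i = 1)
    (hsumhat : ∑ i ∈ range (k + 1), phat i = 1)
    (hbound : ∀ i ∈ range (k + 1), |phat i - p i| ≤ ε * p i) :
    ((∑ i ∈ range (k + 1), (i : ℝ) * phat i) - ∑ i ∈ range (k + 1), (i : ℝ) * p i) ^ 2
      ≤ ε ^ 2 *
        ∑ i ∈ range (k + 1), ((i : ℝ) - ∑ j ∈ range (k + 1), (j : ℝ) * p j) ^ 2 * p i := by
  set E : ℝ := ∑ j ∈ range (k + 1), (j : ℝ) * p j with hE
  have hdiff : (∑ i ∈ range (k + 1), (i : ℝ) * phat i) - E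
      = ∑ i ∈ range (k + 1), ((i : ℝ) - E) * (phat i - p i) := by
    rw [eq_comm]
    simp only [sub_mul, mul_sub]
    rw [Finset.sum_sub_distrib, Finset.sum_sub_distrib, Finset.sum_sub_distrib,
      ← Finset.mul_sum, ← Finset.mul_sum, hsum, hsumhat]
    ring
  rw [hdiff]
  have h1 : |∑ i ∈ range (k + 1), ((i : ℝ) - E) * (phat i - p i)|
      ≤ ∑ i ∈ range (k + 1), |(i : ℝ) - E| * (ε * p i) := by
    refine (Finset.abs_sum_le_sum_abs _ _).trans (Finset.sum_le_sum fun i hi => ?_)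
    rw [abs_mul]
    exact mul_le_mul_of_nonneg_left (hbound i hi) (abs_nonneg _)
  have h2 : (∑ i ∈ range (k + 1), |(i : ℝ) - E| * p i) ^ 2
      ≤ (∑ i ∈ range (k + 1), ((i : ℝ) - E) ^ 2 * p i) * ∑ i ∈ range (k + 1), p i := by
    calc (∑ i ∈ range (k + 1), |(i : ℝ) - E| * p i) ^ 2
        = (∑ i ∈ range (k + 1), (|(i : ℝ) - E| * Real.sqrt (p i)) * Real.sqrt (p i)) ^ 2 := by
          congr 1; refine Finset.sum_congr rfl fun i hi => ?_
          rw [mul_assoc, Real.mul_self_sqrt (hp i hi)]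
      _ ≤ (∑ i ∈ range (k + 1), (|(i : ℝ) - E| * Real.sqrt (p i)) ^ 2) *
          ∑ i ∈ range (k + 1), (Real.sqrt (p i)) ^ 2 :=
          Finset.sum_mul_sq_le_sq_mul_sq _ _ _
      _ = (∑ i ∈ range (k + 1), ((i : ℝ) - E) ^ 2 * p i) * ∑ i ∈ range (k + 1), p i := by
          congr 1 <;> refine Finset.sum_congr rfl fun i hi => ?_
          · rw [mul_pow, sq_abs, Real.sq_sqrt (hp i hi)]
          · rw [Real.sq_sqrt (hp i hi)]
  rw [hsum, mul_one] at h2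
  calc (∑ i ∈ range (k + 1), ((i : ℝ) - E) * (phat i - p i)) ^ 2
      ≤ (∑ i ∈ range (k + 1), |(i : ℝ) - E| * (ε * p i)) ^ 2 := by
        rw [← sq_abs]
        exact pow_le_pow_left₀ (abs_nonneg _) h1 2
    _ = ε ^ 2 * (∑ i ∈ range (k + 1), |(i : ℝ) - E| * p i) ^ 2 := by
        have h3 : ∑ i ∈ range (k + 1), |(i : ℝ) - E| * (ε * p i)
            = ε * ∑ i ∈ range (k + 1), |(i : ℝ) - E| * p i := by
          rw [Finset.mul_sum]; exact Finset.sum_congr rfl fun i _ => by ring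
        rw [h3, mul_pow]
    _ ≤ ε ^ 2 * ∑ i ∈ range (k + 1), ((i : ℝ) - E) ^ 2 * p i :=
        mul_le_mul_of_nonneg_left h2 (sq_nonneg ε)
end

section
/- Let p and p̂ be probability mass functions on {0,1,...,k} with |p̂(i) - p(i)| ≤ ε·p(i) for all i. Let E, Ê be the respective means and Var, V̂ar the respective variances (V̂ar = Σᵢ (i - Ê)²·p̂(i)). Then |V̂ar - Var| ≤ ε·(1 + ε)·Var. -/
open Finset

theorem variance_error_bound_loose (k : ℕ) (ε : ℝ) (hε : 0 ≤ ε) (p phat : ℕ → ℝ)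
    (hp : ∀ i ∈ range (k + 1), 0 ≤ p i) (hphat : ∀ i ∈ range (k + 1), 0 ≤ phat i)
    (hsum : ∑ i ∈ range (k + 1), p i = 1)
    (hsumhat : ∑ i ∈ range (k + 1), phat i = 1)
    (hbound : ∀ i ∈ range (k + 1), |phat i - p i| ≤ ε * p i) :
    |(∑ i ∈ range (k + 1), ((i : ℝ) - ∑ j ∈ range (k + 1), (j : ℝ) * phat j) ^ 2 * phat i)
        - ∑ i ∈ range (k + 1), ((i : ℝ) - ∑ j ∈ range (k + 1), (j : ℝ) * p j) ^ 2 * p i|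
      ≤ ε * (1 + ε) *
        ∑ i ∈ range (k + 1), ((i : ℝ) - ∑ j ∈ range (k + 1), (j : ℝ) * p j) ^ 2 * p i := by
  set s := range (k + 1) with hs
  set E : ℝ := ∑ j ∈ s, (j : ℝ) * p j with hE
  set Eh : ℝ := ∑ j ∈ s, (j : ℝ) * phat j with hEh
  set V : ℝ := ∑ i ∈ s, ((i : ℝ) - E) ^ 2 * p i with hV
  have hVnonneg : 0 ≤ V := Finset.sum_nonneg fun i hi =>
    mul_nonneg (sq_nonneg _) (hp i hi)
  -- mean difference as a sum
  have hmean : Eh - E = ∑ i ∈ s, ((i : ℝ) - E) * (phat i - p i) := by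
    simp only [mul_sub, sub_mul, Finset.sum_sub_distrib, ← Finset.mul_sum, hsum, hsumhat]
    ring
  -- variance identity
  have hid : (∑ i ∈ s, ((i : ℝ) - Eh) ^ 2 * phat i)
      = (∑ i ∈ s, ((i : ℝ) - E) ^ 2 * phat i) - (Eh - E) ^ 2 := by
    have expand : ∀ i ∈ s, ((i : ℝ) - Eh) ^ 2 * phat i
        = ((i : ℝ) - E) ^ 2 * phat i - 2 * (Eh - E) * (((i : ℝ) - E) * phat i)
          + (Eh - E) ^ 2 * phat i := by
      intro i _; ring
    rw [Finset.sum_congr rfl expand]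
    rw [Finset.sum_add_distrib, Finset.sum_sub_distrib, ← Finset.mul_sum, ← Finset.mul_sum,
      hsumhat]
    have h2 : ∑ i ∈ s, ((i : ℝ) - E) * phat i = Eh - E := by
      simp only [sub_mul, Finset.sum_sub_distrib, ← Finset.mul_sum, hsumhat]
      ring
    rw [h2]; ring
  -- difference of the "same-center" sums
  have hdiff : (∑ i ∈ s, ((i : ℝ) - E) ^ 2 * phat i) - V
      = ∑ i ∈ s, ((i : ℝ) - E) ^ 2 * (phat i - p i) := by
    rw [hV, ← Finset.sum_sub_distrib]
    exact Finset.sum_congr rfl fun i _ => by ring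
  have hA : |∑ i ∈ s, ((i : ℝ) - E) ^ 2 * (phat i - p i)| ≤ ε * V := by
    calc |∑ i ∈ s, ((i : ℝ) - E) ^ 2 * (phat i - p i)|
        ≤ ∑ i ∈ s, |((i : ℝ) - E) ^ 2 * (phat i - p i)| := Finset.abs_sum_le_sum_abs _ _
      _ ≤ ∑ i ∈ s, ((i : ℝ) - E) ^ 2 * (ε * p i) := by
          apply Finset.sum_le_sum
          intro i hi
          rw [abs_mul, abs_of_nonneg (sq_nonneg _)]
          exact mul_le_mul_of_nonneg_left (hbound i hi) (sq_nonneg _)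
      _ = ε * V := by
          rw [hV, Finset.mul_sum]
          exact Finset.sum_congr rfl fun i _ => by ring
  -- Cauchy-Schwarz: (Eh - E)^2 ≤ ε^2 * V
  have hCS : (∑ i ∈ s, |(i : ℝ) - E| * p i) ^ 2 ≤ V := by
    have := Finset.sum_mul_sq_le_sq_mul_sq s
      (fun i => |(i : ℝ) - E| * Real.sqrt (p i)) (fun i => Real.sqrt (p i))
    have e1 : ∑ i ∈ s, (|(i : ℝ) - E| * Real.sqrt (p i)) * Real.sqrt (p i)
        = ∑ i ∈ s, |(i : ℝ) - E| * p i := by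
      refine Finset.sum_congr rfl fun i hi => ?_
      rw [mul_assoc, Real.mul_self_sqrt (hp i hi)]
    have e2 : ∑ i ∈ s, (|(i : ℝ) - E| * Real.sqrt (p i)) ^ 2 = V := by
      refine Finset.sum_congr rfl fun i hi => ?_
      rw [mul_pow, Real.sq_sqrt (hp i hi), sq_abs]
    have e3 : ∑ i ∈ s, Real.sqrt (p i) ^ 2 = 1 := by
      rw [← hsum]
      exact Finset.sum_congr rfl fun i hi => Real.sq_sqrt (hp i hi)
    rw [e1, e2, e3, mul_one] at this
    exact this
  have hB : (Eh - E) ^ 2 ≤ ε ^ 2 * V := by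
    have h1 : |Eh - E| ≤ ε * ∑ i ∈ s, |(i : ℝ) - E| * p i := by
      rw [hmean]
      calc |∑ i ∈ s, ((i : ℝ) - E) * (phat i - p i)|
          ≤ ∑ i ∈ s, |((i : ℝ) - E) * (phat i - p i)| := Finset.abs_sum_le_sum_abs _ _
        _ ≤ ∑ i ∈ s, |(i : ℝ) - E| * (ε * p i) := by
            apply Finset.sum_le_sum
            intro i hi
            rw [abs_mul]
            exact mul_le_mul_of_nonneg_left (hbound i hi) (abs_nonneg _)
        _ = ε * ∑ i ∈ s, |(i : ℝ) - E| * p i := by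
            rw [Finset.mul_sum]
            exact Finset.sum_congr rfl fun i _ => by ring
    have h2 : (Eh - E) ^ 2 ≤ (ε * ∑ i ∈ s, |(i : ℝ) - E| * p i) ^ 2 := by
      rw [← sq_abs (Eh - E)]
      apply pow_le_pow_left₀ (abs_nonneg _) h1
    calc (Eh - E) ^ 2 ≤ (ε * ∑ i ∈ s, |(i : ℝ) - E| * p i) ^ 2 := h2
      _ = ε ^ 2 * (∑ i ∈ s, |(i : ℝ) - E| * p i) ^ 2 := by ring
      _ ≤ ε ^ 2 * V := mul_le_mul_of_nonneg_left hCS (sq_nonneg _)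
  -- combine
  calc |(∑ i ∈ s, ((i : ℝ) - Eh) ^ 2 * phat i) - V|
      = |(∑ i ∈ s, ((i : ℝ) - E) ^ 2 * (phat i - p i)) - (Eh - E) ^ 2| := by
        rw [hid]
        congr 1
        rw [← hdiff]; ring
    _ ≤ |∑ i ∈ s, ((i : ℝ) - E) ^ 2 * (phat i - p i)| + |(Eh - E) ^ 2| := abs_sub _ _
    _ ≤ ε * V + ε ^ 2 * V := by
        apply add_le_add hA
        rw [abs_of_nonneg (sq_nonneg _)]; exact hB
    _ = ε * (1 + ε) * V := by ring
end

section
/- Let p and p̂ be probability mass functions on {0,1,...,k} with |p̂(i) - p(i)| ≤ ε·√(p(i)) for all i. Then the means satisfy |Ê - E| ≤ ε·√(k(k+1)·E / 2), where E = Σᵢ i·p(i) and Ê = Σᵢ i·p̂(i). -/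
open Finset

theorem expectation_error_bound_sqrt (k : ℕ) (ε : ℝ) (hε : 0 ≤ ε) (p phat : ℕ → ℝ)
    (hp : ∀ i ∈ range (k + 1), 0 ≤ p i) (hphat : ∀ i ∈ range (k + 1), 0 ≤ phat i)
    (hsum : ∑ i ∈ range (k + 1), p i = 1)
    (hsumhat : ∑ i ∈ range (k + 1), phat i = 1)
    (hbound : ∀ i ∈ range (k + 1), |phat i - p i| ≤ ε * Real.sqrt (p i)) :
    |(∑ i ∈ range (k + 1), (i : ℝ) * phat i) - ∑ i ∈ range (k + 1), (i : ℝ) * p i|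
      ≤ ε * Real.sqrt ((k : ℝ) * (k + 1) * (∑ i ∈ range (k + 1), (i : ℝ) * p i) / 2) := by
  set E : ℝ := ∑ i ∈ range (k + 1), (i : ℝ) * p i with hE
  have hEnn : 0 ≤ E := Finset.sum_nonneg fun i hi =>
    mul_nonneg (Nat.cast_nonneg i) (hp i hi)
  have hS : 0 ≤ ∑ i ∈ range (k + 1), (i : ℝ) * Real.sqrt (p i) :=
    Finset.sum_nonneg fun i hi => mul_nonneg (Nat.cast_nonneg i) (Real.sqrt_nonneg _)
  -- step 1: |Ê - E| ≤ ε * Σ i √(p i)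
  have h1 : |(∑ i ∈ range (k + 1), (i : ℝ) * phat i) - E|
      ≤ ε * ∑ i ∈ range (k + 1), (i : ℝ) * Real.sqrt (p i) := by
    rw [hE, ← Finset.sum_sub_distrib, Finset.mul_sum]
    calc |∑ i ∈ range (k + 1), ((i : ℝ) * phat i - (i : ℝ) * p i)|
        ≤ ∑ i ∈ range (k + 1), |(i : ℝ) * phat i - (i : ℝ) * p i| :=
          Finset.abs_sum_le_sum_abs _ _
      _ ≤ ∑ i ∈ range (k + 1), ε * ((i : ℝ) * Real.sqrt (p i)) := by
          apply Finset.sum_le_sum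
          intro i hi
          rw [← mul_sub, abs_mul, abs_of_nonneg (Nat.cast_nonneg i : (0:ℝ) ≤ i)]
          calc (i : ℝ) * |phat i - p i| ≤ (i : ℝ) * (ε * Real.sqrt (p i)) :=
                mul_le_mul_of_nonneg_left (hbound i hi) (Nat.cast_nonneg i)
            _ = ε * ((i : ℝ) * Real.sqrt (p i)) := by ring
  -- step 2: Cauchy–Schwarz
  have hCS : (∑ i ∈ range (k + 1), (i : ℝ) * Real.sqrt (p i)) ^ 2
      ≤ ((k : ℝ) * (k + 1) / 2) * E := by
    have key := Finset.sum_mul_sq_le_sq_mul_sq (range (k + 1))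
      (fun i => Real.sqrt i) (fun i => Real.sqrt ((i : ℝ) * p i))
    have e1 : ∑ i ∈ range (k + 1), Real.sqrt i * Real.sqrt ((i : ℝ) * p i)
        = ∑ i ∈ range (k + 1), (i : ℝ) * Real.sqrt (p i) := by
      apply Finset.sum_congr rfl
      intro i hi
      rw [Real.sqrt_mul (Nat.cast_nonneg i), ← mul_assoc,
        Real.mul_self_sqrt (Nat.cast_nonneg i)]
    have e2 : ∑ i ∈ range (k + 1), Real.sqrt i ^ 2 = (k : ℝ) * (k + 1) / 2 := by
      rw [Finset.sum_congr rfl fun i _ => Real.sq_sqrt (Nat.cast_nonneg i)]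
      rw [← Nat.cast_sum]
      rw [Finset.sum_range_id]
      push_cast [Nat.succ_sub_one]
      rw [Nat.cast_div]
      · push_cast; ring
      · rw [mul_comm]; exact Nat.even_mul_succ_self k |>.two_dvd
      · norm_num
    have e3 : ∑ i ∈ range (k + 1), Real.sqrt ((i : ℝ) * p i) ^ 2 = E := by
      apply Finset.sum_congr rfl
      intro i hi
      exact Real.sq_sqrt (mul_nonneg (Nat.cast_nonneg i) (hp i hi))
    rw [e1, e2, e3] at key
    exact key
  have h2 : ∑ i ∈ range (k + 1), (i : ℝ) * Real.sqrt (p i)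
      ≤ Real.sqrt ((k : ℝ) * (k + 1) * E / 2) := by
    rw [← Real.sqrt_sq hS]
    apply Real.sqrt_le_sqrt
    calc (∑ i ∈ range (k + 1), (i : ℝ) * Real.sqrt (p i)) ^ 2
        ≤ ((k : ℝ) * (k + 1) / 2) * E := hCS
      _ = (k : ℝ) * (k + 1) * E / 2 := by ring
  calc |(∑ i ∈ range (k + 1), (i : ℝ) * phat i) - E|
      ≤ ε * ∑ i ∈ range (k + 1), (i : ℝ) * Real.sqrt (p i) := h1
    _ ≤ ε * Real.sqrt ((k : ℝ) * (k + 1) * E / 2) :=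
        mul_le_mul_of_nonneg_left h2 hε
end

section
/- Let p and p̂ be probability mass functions on {0,1,...,k} with |p̂(i) - p(i)| ≤ ε·√(p(i)) for all i. Let E, Ê be the means and Var, V̂ar the variances under p and p̂ respectively. Then |V̂ar - Var| ≤ ε·(k+1)·(√((2k+1)·Var/6) + ε·Var). -/
open Finset

lemma sum_range_cast_id (k : ℕ) : ∑ i ∈ range (k + 1), (i : ℝ) = k * (k + 1) / 2 := by
  induction k with
  | zero => simp
  | succ n ih => rw [Finset.sum_range_succ, ih]; push_cast; ring

lemma sum_range_cast_sq (k : ℕ) :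
    ∑ i ∈ range (k + 1), (i : ℝ) ^ 2 = k * (k + 1) * (2 * k + 1) / 6 := by
  induction k with
  | zero => simp
  | succ n ih => rw [Finset.sum_range_succ, ih]; push_cast; ring

theorem variance_error_bound_sqrt (k : ℕ) (ε : ℝ) (hε : 0 ≤ ε) (p phat : ℕ → ℝ)
    (hp : ∀ i ∈ range (k + 1), 0 ≤ p i) (hphat : ∀ i ∈ range (k + 1), 0 ≤ phat i)
    (hsum : ∑ i ∈ range (k + 1), p i = 1)
    (hsumhat : ∑ i ∈ range (k + 1), phat i = 1)
    (hbound : ∀ i ∈ range (k + 1), |phat i - p i| ≤ ε * Real.sqrt (p i)) :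
    |(∑ i ∈ range (k + 1), ((i : ℝ) - ∑ j ∈ range (k + 1), (j : ℝ) * phat j) ^ 2 * phat i)
        - ∑ i ∈ range (k + 1), ((i : ℝ) - ∑ j ∈ range (k + 1), (j : ℝ) * p j) ^ 2 * p i|
      ≤ ε * ((k : ℝ) + 1) *
        (Real.sqrt ((2 * (k : ℝ) + 1) *
            (∑ i ∈ range (k + 1),
              ((i : ℝ) - ∑ j ∈ range (k + 1), (j : ℝ) * p j) ^ 2 * p i) / 6)
          + ε * ∑ i ∈ range (k + 1),
              ((i : ℝ) - ∑ j ∈ range (k + 1), (j : ℝ) * p j) ^ 2 * p i) := by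
  set E := ∑ j ∈ range (k + 1), (j : ℝ) * p j with hEdef
  set Ehat := ∑ j ∈ range (k + 1), (j : ℝ) * phat j with hEhatdef
  set V := ∑ i ∈ range (k + 1), ((i : ℝ) - E) ^ 2 * p i with hVdef
  have hVnn : 0 ≤ V := Finset.sum_nonneg fun i hi => mul_nonneg (sq_nonneg _) (hp i hi)
  have hE0 : 0 ≤ E := Finset.sum_nonneg fun i hi =>
    mul_nonneg (Nat.cast_nonneg i) (hp i hi)
  have hEk : E ≤ (k : ℝ) := by
    calc E ≤ ∑ i ∈ range (k + 1), (k : ℝ) * p i := by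
          refine Finset.sum_le_sum fun i hi => ?_
          have hik : (i : ℝ) ≤ k := by
            exact_mod_cast Nat.lt_succ_iff.mp (Finset.mem_range.mp hi)
          exact mul_le_mul_of_nonneg_right hik (hp i hi)
      _ = k := by rw [← Finset.mul_sum, hsum, mul_one]
  have h1 : ∑ i ∈ range (k + 1), ((i : ℝ) - E) * phat i = Ehat - E := by
    simp only [sub_mul]
    rw [Finset.sum_sub_distrib, ← Finset.mul_sum, hsumhat, mul_one]
  have h1p : ∑ i ∈ range (k + 1), ((i : ℝ) - E) * p i = 0 := by
    simp only [sub_mul]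
    rw [Finset.sum_sub_distrib, ← Finset.mul_sum, hsum, mul_one, ← hEdef, sub_self]
  have hdiffE : Ehat - E = ∑ i ∈ range (k + 1), ((i : ℝ) - E) * (phat i - p i) := by
    simp only [mul_sub]
    rw [Finset.sum_sub_distrib, h1, h1p, sub_zero]
  have key : ∑ i ∈ range (k + 1), ((i : ℝ) - Ehat) ^ 2 * phat i
      = ∑ i ∈ range (k + 1), ((i : ℝ) - E) ^ 2 * phat i - (Ehat - E) ^ 2 := by
    have expand : ∀ i ∈ range (k + 1), ((i : ℝ) - Ehat) ^ 2 * phat i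
        = ((i : ℝ) - E) ^ 2 * phat i - (2 * (Ehat - E)) * (((i : ℝ) - E) * phat i)
          + (Ehat - E) ^ 2 * phat i := fun i _ => by ring
    rw [Finset.sum_congr rfl expand, Finset.sum_add_distrib, Finset.sum_sub_distrib,
      ← Finset.mul_sum, ← Finset.mul_sum, h1, hsumhat]
    ring
  have hdiff : ∑ i ∈ range (k + 1), ((i : ℝ) - Ehat) ^ 2 * phat i - V
      = (∑ i ∈ range (k + 1), ((i : ℝ) - E) ^ 2 * (phat i - p i)) - (Ehat - E) ^ 2 := by
    rw [key]
    have h2 : ∑ i ∈ range (k + 1), ((i : ℝ) - E) ^ 2 * (phat i - p i)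
        = ∑ i ∈ range (k + 1), ((i : ℝ) - E) ^ 2 * phat i - V := by
      simp only [mul_sub]
      rw [Finset.sum_sub_distrib, hVdef]
    rw [h2]; ring
  have hSexp : ∑ i ∈ range (k + 1), ((i : ℝ) - E) ^ 2
      = (∑ i ∈ range (k + 1), (i : ℝ) ^ 2) - 2 * E * (∑ i ∈ range (k + 1), (i : ℝ))
        + ((k : ℝ) + 1) * E ^ 2 := by
    have hc : ∀ i ∈ range (k + 1), ((i : ℝ) - E) ^ 2
        = (i : ℝ) ^ 2 - 2 * E * (i : ℝ) + E ^ 2 := fun i _ => by ring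
    rw [Finset.sum_congr rfl hc, Finset.sum_add_distrib, Finset.sum_sub_distrib,
      ← Finset.mul_sum, Finset.sum_const, Finset.card_range, nsmul_eq_mul]
    push_cast; ring
  have hS : ∑ i ∈ range (k + 1), ((i : ℝ) - E) ^ 2
      ≤ ((k : ℝ) + 1) ^ 2 * (2 * k + 1) / 6 := by
    rw [hSexp, sum_range_cast_id, sum_range_cast_sq]
    nlinarith [mul_nonneg hE0 (sub_nonneg.mpr hEk), Nat.cast_nonneg (α := ℝ) k]
  have hSnn : 0 ≤ ∑ i ∈ range (k + 1), ((i : ℝ) - E) ^ 2 :=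
    Finset.sum_nonneg fun i _ => sq_nonneg _
  -- Term 1
  have hT1 : |∑ i ∈ range (k + 1), ((i : ℝ) - E) ^ 2 * (phat i - p i)|
      ≤ ε * (Real.sqrt V * Real.sqrt (∑ i ∈ range (k + 1), ((i : ℝ) - E) ^ 2)) := by
    have step1 : |∑ i ∈ range (k + 1), ((i : ℝ) - E) ^ 2 * (phat i - p i)|
        ≤ ∑ i ∈ range (k + 1), ((i : ℝ) - E) ^ 2 * (ε * Real.sqrt (p i)) := by
      refine (Finset.abs_sum_le_sum_abs _ _).trans (Finset.sum_le_sum fun i hi => ?_)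
      rw [abs_mul, abs_of_nonneg (sq_nonneg _)]
      exact mul_le_mul_of_nonneg_left (hbound i hi) (sq_nonneg _)
    have step2 : ∑ i ∈ range (k + 1), ((i : ℝ) - E) ^ 2 * (ε * Real.sqrt (p i))
        = ε * ∑ i ∈ range (k + 1),
            (|(i : ℝ) - E| * Real.sqrt (p i)) * |(i : ℝ) - E| := by
      rw [Finset.mul_sum]
      refine Finset.sum_congr rfl fun i _ => ?_
      rw [show (|(i : ℝ) - E| * Real.sqrt (p i)) * |(i : ℝ) - E|
          = |(i : ℝ) - E| ^ 2 * Real.sqrt (p i) by ring, sq_abs]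
      ring
    have cs := Real.sum_mul_le_sqrt_mul_sqrt (range (k + 1))
      (fun i => |(i : ℝ) - E| * Real.sqrt (p i)) (fun i => |(i : ℝ) - E|)
    have e1 : ∑ i ∈ range (k + 1), (|(i : ℝ) - E| * Real.sqrt (p i)) ^ 2 = V := by
      refine Finset.sum_congr rfl fun i hi => ?_
      rw [mul_pow, sq_abs, Real.sq_sqrt (hp i hi)]
    have e2 : ∑ i ∈ range (k + 1), |(i : ℝ) - E| ^ 2
        = ∑ i ∈ range (k + 1), ((i : ℝ) - E) ^ 2 :=
      Finset.sum_congr rfl fun i _ => sq_abs _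
    rw [e1, e2] at cs
    exact step1.trans (step2.le.trans (mul_le_mul_of_nonneg_left cs hε))
  -- Term 2
  have hT2 : (Ehat - E) ^ 2 ≤ ε ^ 2 * ((k : ℝ) + 1) * V := by
    have habs : |Ehat - E| ≤ ε * (Real.sqrt V * Real.sqrt ((k : ℝ) + 1)) := by
      rw [hdiffE]
      have step1 : |∑ i ∈ range (k + 1), ((i : ℝ) - E) * (phat i - p i)|
          ≤ ∑ i ∈ range (k + 1), |(i : ℝ) - E| * (ε * Real.sqrt (p i)) := by
        refine (Finset.abs_sum_le_sum_abs _ _).trans (Finset.sum_le_sum fun i hi => ?_)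
        rw [abs_mul]
        exact mul_le_mul_of_nonneg_left (hbound i hi) (abs_nonneg _)
      have step2 : ∑ i ∈ range (k + 1), |(i : ℝ) - E| * (ε * Real.sqrt (p i))
          = ε * ∑ i ∈ range (k + 1), (|(i : ℝ) - E| * Real.sqrt (p i)) * 1 := by
        rw [Finset.mul_sum]; refine Finset.sum_congr rfl fun i _ => by ring
      have cs := Real.sum_mul_le_sqrt_mul_sqrt (range (k + 1))
        (fun i => |(i : ℝ) - E| * Real.sqrt (p i)) (fun _ => (1 : ℝ))
      have e1 : ∑ i ∈ range (k + 1), (|(i : ℝ) - E| * Real.sqrt (p i)) ^ 2 = V := by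
        refine Finset.sum_congr rfl fun i hi => ?_
        rw [mul_pow, sq_abs, Real.sq_sqrt (hp i hi)]
      have e2 : ∑ i ∈ range (k + 1), ((1 : ℝ)) ^ 2 = (k : ℝ) + 1 := by
        simp [Finset.card_range]
      rw [e1, e2] at cs
      exact step1.trans (step2.le.trans (mul_le_mul_of_nonneg_left cs hε))
    calc (Ehat - E) ^ 2 = |Ehat - E| ^ 2 := (sq_abs _).symm
      _ ≤ (ε * (Real.sqrt V * Real.sqrt ((k : ℝ) + 1))) ^ 2 := by
          exact pow_le_pow_left₀ (abs_nonneg _) habs 2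
      _ = ε ^ 2 * ((k : ℝ) + 1) * V := by
          rw [mul_pow, mul_pow, Real.sq_sqrt hVnn,
            Real.sq_sqrt (by positivity : (0 : ℝ) ≤ (k : ℝ) + 1)]
          ring
  -- combine
  rw [hdiff]
  have habs2 : |(∑ i ∈ range (k + 1), ((i : ℝ) - E) ^ 2 * (phat i - p i)) - (Ehat - E) ^ 2|
      ≤ |∑ i ∈ range (k + 1), ((i : ℝ) - E) ^ 2 * (phat i - p i)| + (Ehat - E) ^ 2 := by
    refine (abs_sub _ _).trans ?_
    rw [abs_of_nonneg (sq_nonneg (Ehat - E))]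
  have hsqrtS : Real.sqrt (∑ i ∈ range (k + 1), ((i : ℝ) - E) ^ 2)
      ≤ Real.sqrt (((k : ℝ) + 1) ^ 2 * (2 * k + 1) / 6) := Real.sqrt_le_sqrt hS
  have hfin1 : ε * (Real.sqrt V * Real.sqrt (∑ i ∈ range (k + 1), ((i : ℝ) - E) ^ 2))
      ≤ ε * (((k : ℝ) + 1) * Real.sqrt ((2 * (k : ℝ) + 1) * V / 6)) := by
    refine mul_le_mul_of_nonneg_left ?_ hε
    calc Real.sqrt V * Real.sqrt (∑ i ∈ range (k + 1), ((i : ℝ) - E) ^ 2)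
        ≤ Real.sqrt V * Real.sqrt (((k : ℝ) + 1) ^ 2 * (2 * k + 1) / 6) :=
          mul_le_mul_of_nonneg_left hsqrtS (Real.sqrt_nonneg _)
      _ = Real.sqrt (V * (((k : ℝ) + 1) ^ 2 * (2 * k + 1) / 6)) :=
          (Real.sqrt_mul hVnn _).symm
      _ = Real.sqrt (((k : ℝ) + 1) ^ 2 * ((2 * (k : ℝ) + 1) * V / 6)) := by
          ring_nf
      _ = ((k : ℝ) + 1) * Real.sqrt ((2 * (k : ℝ) + 1) * V / 6) := by
          rw [Real.sqrt_mul (sq_nonneg _), Real.sqrt_sq (by positivity : (0 : ℝ) ≤ (k : ℝ) + 1)]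
  calc |(∑ i ∈ range (k + 1), ((i : ℝ) - E) ^ 2 * (phat i - p i)) - (Ehat - E) ^ 2|
      ≤ |∑ i ∈ range (k + 1), ((i : ℝ) - E) ^ 2 * (phat i - p i)| + (Ehat - E) ^ 2 := habs2
    _ ≤ ε * (Real.sqrt V * Real.sqrt (∑ i ∈ range (k + 1), ((i : ℝ) - E) ^ 2))
        + ε ^ 2 * ((k : ℝ) + 1) * V := add_le_add hT1 hT2
    _ ≤ ε * (((k : ℝ) + 1) * Real.sqrt ((2 * (k : ℝ) + 1) * V / 6))
        + ε ^ 2 * ((k : ℝ) + 1) * V := add_le_add_left hfin1 _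
    _ = ε * ((k : ℝ) + 1) * (Real.sqrt ((2 * (k : ℝ) + 1) * V / 6) + ε * V) := by ring
end
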